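/- Let (q_j)_{j≥1} be a sequence of nonnegative reals with Σ_{j≥1} q_j = 1. Then Σ_{j≥1} q_j log(1/q_j) ≤ 2 Σ_{j≥1} q_j log j + 1, where both sides are sums of nonnegative terms taken in [0, +∞] and q log(1/q) is interpreted as 0 when q = 0. -/

import Mathlib

open scoped ENNReal

/-- `x log(c/x) ≤ c/e` for `x ≥ 0`, `c > 0`. -/
lemma aux_xlog (c x : ℝ) (hc : 0 < c) (hx : 0 ≤ x) :
    x * Real.log (c / x) ≤ c / Real.exp 1 := by
  rcases eq_or_lt_of_le hx with rfl | hx'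
  · simp [le_div_iff₀ (Real.exp_pos 1), hc.le]
  · have he : (0:ℝ) < Real.exp 1 := Real.exp_pos 1
    have h1 : (0:ℝ) < c / (x * Real.exp 1) := by positivity
    have hlog : Real.log (c / x) ≤ c / (x * Real.exp 1) := by
      have h4 : Real.log (c / (x * Real.exp 1)) = Real.log (c / x) - 1 := by
        rw [show c / (x * Real.exp 1) = (c / x) / Real.exp 1 by ring,
          Real.log_div (by positivity) (by positivity), Real.log_exp]
      have h5 := Real.log_le_sub_one_of_pos h1
      rw [h4] at h5
      linarith
    calc x * Real.log (c / x) ≤ x * (c / (x * Real.exp 1)) :=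
          mul_le_mul_of_nonneg_left hlog hx
      _ = c / Real.exp 1 := by field_simp

/-- Pointwise entropy bound: `q log(1/q) ≤ 2 q log n + 1/(e n²)` for `q ≥ 0`, `n ≥ 1`. -/
lemma aux_pointwise (j : ℕ) (q : ℝ) (hq : 0 ≤ q) :
    q * Real.log (1 / q) ≤
      2 * (q * Real.log ((j + 1 : ℕ) : ℝ)) + 1 / (Real.exp 1 * ((j:ℝ) + 1) ^ 2) := by
  set n : ℝ := (j : ℝ) + 1 with hn
  have hn0 : (0:ℝ) < n := by positivity
  have hcast : ((j + 1 : ℕ) : ℝ) = n := by push_cast [hn]; ring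
  rw [hcast]
  rcases eq_or_lt_of_le hq with rfl | hq'
  · have : (0:ℝ) ≤ 1 / (Real.exp 1 * n ^ 2) := by positivity
    simpa using this
  · have hkey : q * Real.log (1 / q) =
        2 * (q * Real.log n) + q * Real.log ((1 / n ^ 2) / q) := by
      have h1 : (1:ℝ) / q = n ^ 2 * ((1 / n ^ 2) / q) := by
        field_simp
      rw [h1, Real.log_mul (by positivity) (by positivity), Real.log_pow]
      push_cast
      ring
    rw [hkey]
    have h2 : q * Real.log ((1 / n ^ 2) / q) ≤ (1 / n ^ 2) / Real.exp 1 :=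
      aux_xlog _ _ (by positivity) hq
    have h3 : (1 / n ^ 2) / Real.exp 1 = 1 / (Real.exp 1 * n ^ 2) := by
      field_simp
    linarith [h2, h3 ▸ h2]

/-- Partial sums of `1/(j+1)²` are bounded by `2`. -/
lemma aux_sum_sq' (m : ℕ) :
    ∑ j ∈ Finset.range (m + 1), (1:ℝ) / ((j:ℝ) + 1) ^ 2 ≤ 2 - 1 / ((m:ℝ) + 1) := by
  induction m with
  | zero => norm_num
  | succ k ih =>
    rw [Finset.sum_range_succ]
    have h : (1:ℝ) / ((k:ℝ) + 1 + 1) ^ 2 ≤ 1 / ((k:ℝ) + 1) - 1 / ((k:ℝ) + 2) := by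
      rw [div_sub_div _ _ (by positivity) (by positivity), show ((k:ℝ)+1+1) = (k:ℝ)+2 by ring,
        div_le_div_iff₀ (by positivity) (by positivity)]
      nlinarith [sq_nonneg ((k:ℝ) + 1)]
    push_cast
    push_cast at ih
    rw [show ((k:ℝ)+1+1) = (k:ℝ)+2 by ring] at h ⊢
    linarith

lemma aux_sum_sq (m : ℕ) : ∑ j ∈ Finset.range m, (1:ℝ) / ((j:ℝ) + 1) ^ 2 ≤ 2 := by
  have h1 : ∑ j ∈ Finset.range m, (1:ℝ) / ((j:ℝ) + 1) ^ 2 ≤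
      ∑ j ∈ Finset.range (m + 1), (1:ℝ) / ((j:ℝ) + 1) ^ 2 := by
    apply Finset.sum_le_sum_of_subset_of_nonneg (Finset.range_subset_range.2 (Nat.le_succ m))
    intro j _ _; positivity
  have h2 := aux_sum_sq' m
  have h3 : (0:ℝ) < 1 / ((m:ℝ) + 1) := by positivity
  linarith

theorem statement18 (q : ℕ → ℝ) (hq : ∀ j : ℕ, 1 ≤ j → 0 ≤ q j)
    (hsum : HasSum (fun j : ℕ => q (j + 1)) 1) :
    ∑' j : ℕ, ENNReal.ofReal (q (j + 1) * Real.log (1 / q (j + 1))) ≤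
      2 * (∑' j : ℕ, ENNReal.ofReal (q (j + 1) * Real.log ((j + 1 : ℕ) : ℝ))) + 1 := by
  have hq' : ∀ j : ℕ, 0 ≤ q (j + 1) := fun j => hq (j + 1) (Nat.le_add_left 1 j)
  -- pointwise bound in ℝ≥0∞
  have hpt : ∀ j : ℕ, ENNReal.ofReal (q (j + 1) * Real.log (1 / q (j + 1))) ≤
      2 * ENNReal.ofReal (q (j + 1) * Real.log ((j + 1 : ℕ) : ℝ)) +
        ENNReal.ofReal (1 / (Real.exp 1 * ((j:ℝ) + 1) ^ 2)) := by
    intro j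
    calc ENNReal.ofReal (q (j + 1) * Real.log (1 / q (j + 1)))
        ≤ ENNReal.ofReal (2 * (q (j + 1) * Real.log ((j + 1 : ℕ) : ℝ)) +
            1 / (Real.exp 1 * ((j:ℝ) + 1) ^ 2)) :=
          ENNReal.ofReal_le_ofReal (aux_pointwise j _ (hq' j))
      _ ≤ ENNReal.ofReal (2 * (q (j + 1) * Real.log ((j + 1 : ℕ) : ℝ))) +
            ENNReal.ofReal (1 / (Real.exp 1 * ((j:ℝ) + 1) ^ 2)) := ENNReal.ofReal_add_le
      _ = 2 * ENNReal.ofReal (q (j + 1) * Real.log ((j + 1 : ℕ) : ℝ)) +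
            ENNReal.ofReal (1 / (Real.exp 1 * ((j:ℝ) + 1) ^ 2)) := by
          rw [ENNReal.ofReal_mul (by norm_num)]
          norm_num
  -- the error series is bounded by 1
  have herr : ∑' j : ℕ, ENNReal.ofReal (1 / (Real.exp 1 * ((j:ℝ) + 1) ^ 2)) ≤ 1 := by
    have hsum2 : ∀ s : Finset ℕ,
        ∑ j ∈ s, ENNReal.ofReal (1 / (Real.exp 1 * ((j:ℝ) + 1) ^ 2)) ≤ 1 := by
      intro s
      obtain ⟨m, hm⟩ := s.exists_nat_subset_range
      calc ∑ j ∈ s, ENNReal.ofReal (1 / (Real.exp 1 * ((j:ℝ) + 1) ^ 2))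
          ≤ ∑ j ∈ Finset.range m, ENNReal.ofReal (1 / (Real.exp 1 * ((j:ℝ) + 1) ^ 2)) :=
            Finset.sum_le_sum_of_subset hm
        _ = ENNReal.ofReal (∑ j ∈ Finset.range m, 1 / (Real.exp 1 * ((j:ℝ) + 1) ^ 2)) := by
            rw [ENNReal.ofReal_sum_of_nonneg]
            intro j _; positivity
        _ ≤ 1 := by
            rw [show (1 : ℝ≥0∞) = ENNReal.ofReal 1 by simp]
            apply ENNReal.ofReal_le_ofReal
            have h1 : ∑ j ∈ Finset.range m, 1 / (Real.exp 1 * ((j:ℝ) + 1) ^ 2) =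
                (1 / Real.exp 1) * ∑ j ∈ Finset.range m, 1 / ((j:ℝ) + 1) ^ 2 := by
              rw [Finset.mul_sum]
              congr 1; ext j
              rw [one_div_mul_eq_div]
              rw [div_div, mul_comm]
            rw [h1]
            have h2 := aux_sum_sq m
            have h3 : ∑ j ∈ Finset.range m, (1:ℝ) / ((j:ℝ) + 1) ^ 2 ≤ 2 := by
              have : (0:ℝ) < 1 / ((m:ℝ) + 1) := by positivity
              linarith
            have he : (2:ℝ) ≤ Real.exp 1 := by
              have := Real.add_one_le_exp 1
              linarith
            have hse : (0:ℝ) ≤ ∑ j ∈ Finset.range m, (1:ℝ) / ((j:ℝ) + 1) ^ 2 := by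
              apply Finset.sum_nonneg; intro j _; positivity
            rw [div_mul_eq_mul_div, one_mul, div_le_one (Real.exp_pos 1)]
            linarith
    rw [ENNReal.tsum_eq_iSup_sum]
    exact iSup_le hsum2
  calc ∑' j : ℕ, ENNReal.ofReal (q (j + 1) * Real.log (1 / q (j + 1)))
      ≤ ∑' j : ℕ, (2 * ENNReal.ofReal (q (j + 1) * Real.log ((j + 1 : ℕ) : ℝ)) +
          ENNReal.ofReal (1 / (Real.exp 1 * ((j:ℝ) + 1) ^ 2))) := ENNReal.tsum_le_tsum hpt
    _ = ∑' j : ℕ, 2 * ENNReal.ofReal (q (j + 1) * Real.log ((j + 1 : ℕ) : ℝ)) +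
          ∑' j : ℕ, ENNReal.ofReal (1 / (Real.exp 1 * ((j:ℝ) + 1) ^ 2)) := ENNReal.tsum_add
    _ = 2 * (∑' j : ℕ, ENNReal.ofReal (q (j + 1) * Real.log ((j + 1 : ℕ) : ℝ))) +
          ∑' j : ℕ, ENNReal.ofReal (1 / (Real.exp 1 * ((j:ℝ) + 1) ^ 2)) := by
        rw [ENNReal.tsum_mul_left]
    _ ≤ 2 * (∑' j : ℕ, ENNReal.ofReal (q (j + 1) * Real.log ((j + 1 : ℕ) : ℝ))) + 1 :=
        add_le_add le_rfl herr
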